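/- For subsets A, B of ℕ (with ℕ starting at 1), let μ(A) = Σ_{k ∈ A} 2^{−k} and d(A, B) = μ(A \ B) + μ(B \ A), a metric on the power set K of ℕ. Let Y be a real Banach space and j : K → Y a distance-preserving map with j(∅) = 0. Set y_n = 2^n · j({n}) for each n ∈ ℕ. Then the linear map T : ℓ₁ → Y defined by T(α) = Σ_k α_k y_k is a linear isometric embedding of ℓ₁ into Y. -/

import Mathlib

noncomputable def muSet (A : Set ℕ) : ℝ := ∑' k : A, ((1 : ℝ) / 2) ^ ((k : ℕ) + 1)

noncomputable def dSet (A B : Set ℕ) : ℝ := muSet (A \ B) + muSet (B \ A)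

private lemma muSet_coe (s : Finset ℕ) :
    muSet (↑s) = ∑ k ∈ s, ((1 : ℝ) / 2) ^ (k + 1) := by
  simpa [muSet] using Finset.tsum_subtype s (fun k => ((1 : ℝ) / 2) ^ (k + 1))

private lemma dSet_coe (s t : Finset ℕ) :
    dSet (↑s) (↑t) = ∑ k ∈ s \ t, ((1 : ℝ) / 2) ^ (k + 1)
      + ∑ k ∈ t \ s, ((1 : ℝ) / 2) ^ (k + 1) := by
  rw [dSet, ← Finset.coe_sdiff, ← Finset.coe_sdiff, muSet_coe, muSet_coe]

private lemma split3 {a b c x y z : ℝ} (hx : x ≤ a) (hy : y ≤ b) (hz : z ≤ c)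
    (h : x + y + z = a + b + c) : x = a ∧ y = b ∧ z = c :=
  ⟨by linarith, by linarith, by linarith⟩

section main
variable {Y : Type*} [NormedAddCommGroup Y] [NormedSpace ℝ Y] [CompleteSpace Y]
  (j : Set ℕ → Y)

private lemma key_norm (hj : ∀ A B : Set ℕ, dist (j A) (j B) = dSet A B)
    (hj0 : j ∅ = 0) (F : Finset ℕ) (α : ℕ → ℝ) :
    ‖∑ k ∈ F, α k • ((2 : ℝ) ^ (k + 1) • j {k})‖ = ∑ k ∈ F, |α k| := by
  set w : ℕ → ℝ := fun k => ((1 : ℝ) / 2) ^ (k + 1) with hw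
  have hwpos : ∀ k, 0 < w k := fun k => by positivity
  have hpow : ∀ k : ℕ, (2 : ℝ) ^ (k + 1) * w k = 1 := by
    intro k
    rw [hw]
    show (2:ℝ)^(k+1) * (1/2)^(k+1) = 1
    rw [← mul_pow]
    norm_num
  have hsingle : ∀ k : ℕ, ({k} : Set ℕ) = (↑({k} : Finset ℕ) : Set ℕ) := fun k => by simp
  have hempty : (∅ : Set ℕ) = (↑(∅ : Finset ℕ) : Set ℕ) := by simp
  have hnormy : ∀ k : ℕ, ‖j {k}‖ = w k := by
    intro k
    have h := hj {k} ∅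
    rw [hj0, dist_zero_right] at h
    rw [h, hsingle, hempty, dSet_coe]
    simp [hw]
  apply le_antisymm
  · calc ‖∑ k ∈ F, α k • ((2 : ℝ) ^ (k + 1) • j {k})‖
        ≤ ∑ k ∈ F, ‖α k • ((2 : ℝ) ^ (k + 1) • j {k})‖ := norm_sum_le _ _
      _ = ∑ k ∈ F, |α k| := by
          apply Finset.sum_congr rfl
          intro k _
          rw [norm_smul, norm_smul, hnormy, Real.norm_eq_abs, Real.norm_eq_abs,
            abs_of_pos (by positivity : (0:ℝ) < (2:ℝ) ^ (k+1)), hpow, mul_one]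
  · set A : Finset ℕ := F.filter (fun k => 0 < α k) with hA
    set B : Finset ℕ := F.filter (fun k => α k < 0) with hB
    have hAB : Disjoint A B := by
      rw [hA, hB, Finset.disjoint_filter]
      intro k _ h1 h2
      exact absurd h2 (not_lt.2 h1.le)
    by_cases hne : A = ∅ ∧ B = ∅
    · have hz : ∀ k ∈ F, α k = 0 := by
        intro k hk
        by_contra h
        rcases lt_or_gt_of_ne h with h' | h'
        · exact absurd (Finset.mem_filter.2 ⟨hk, h'⟩) (by rw [← hB, hne.2]; simp)
        · exact absurd (Finset.mem_filter.2 ⟨hk, h'⟩) (by rw [← hA, hne.1]; simp)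
      have : ∑ k ∈ F, |α k| = 0 := Finset.sum_eq_zero fun k hk => by rw [hz k hk, abs_zero]
      rw [this]; positivity
    · have hABdist : dist (j ↑A) (j ↑B) = ∑ k ∈ A, w k + ∑ k ∈ B, w k := by
        rw [hj, dSet_coe, Finset.sdiff_eq_self_of_disjoint hAB,
          Finset.sdiff_eq_self_of_disjoint hAB.symm]
      have hvpos : 0 < ∑ k ∈ A, w k + ∑ k ∈ B, w k := by
        have h2 : 0 ≤ ∑ k ∈ B, w k := Finset.sum_nonneg fun i _ => (hwpos i).le
        have h2' : 0 ≤ ∑ k ∈ A, w k := Finset.sum_nonneg fun i _ => (hwpos i).le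
        rcases not_and_or.1 hne with h | h
        · obtain ⟨k, hk⟩ := Finset.nonempty_of_ne_empty h
          have h1 : 0 < ∑ k ∈ A, w k :=
            Finset.sum_pos' (fun i _ => (hwpos i).le) ⟨k, hk, hwpos k⟩
          linarith
        · obtain ⟨k, hk⟩ := Finset.nonempty_of_ne_empty h
          have h1 : 0 < ∑ k ∈ B, w k :=
            Finset.sum_pos' (fun i _ => (hwpos i).le) ⟨k, hk, hwpos k⟩
          linarith
      have hv : j ↑A - j ↑B ≠ 0 := by
        intro h0
        rw [dist_eq_norm, h0, norm_zero] at hABdist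
        linarith
      obtain ⟨f, hf1, hfv'⟩ := exists_dual_vector ℝ _ (norm_ne_zero_iff.mpr hv)
      have hfv : f (j ↑A - j ↑B) = ‖j ↑A - j ↑B‖ := by simpa using hfv'
      have hfle : ∀ x y : Y, f (x - y) ≤ dist x y := by
        intro x y
        calc f (x - y) ≤ ‖f (x - y)‖ := le_abs_self _
          _ ≤ ‖f‖ * ‖x - y‖ := f.le_opNorm _
          _ = dist x y := by rw [hf1, one_mul, dist_eq_norm]
      have hfnorm : f (j ↑A - j ↑B) = ∑ k ∈ A, w k + ∑ k ∈ B, w k := by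
        rw [hfv]; rw [← dist_eq_norm, hABdist]
      have hdA0 : dist (j ↑A) (j ∅) = ∑ i ∈ A, w i := by
        rw [hj, hempty, dSet_coe]; simp [hw]
      have hdB0 : dist (j ∅) (j ↑B) = ∑ i ∈ B, w i := by
        rw [hj, hempty, dSet_coe]; simp [hw]
      -- f (j {k}) = w k for k ∈ A
      have hfA : ∀ k ∈ A, f (j {k}) = w k := by
        intro k hk
        have e1 : dist (j ↑A) (j {k}) = ∑ i ∈ A, w i - w k := by
          rw [hj, hsingle, dSet_coe, Finset.sdiff_singleton_eq_erase]
          have : ({k} : Finset ℕ) \ A = ∅ := by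
            rw [Finset.sdiff_eq_empty_iff_subset, Finset.singleton_subset_iff]; exact hk
          rw [this]
          simp [hw, Finset.sum_erase_eq_sub hk]
        have e2 : dist (j {k}) (j ∅) = w k := by
          rw [dist_eq_norm, hj0, sub_zero, hnormy]
        have hsplit : f (j ↑A - j {k}) + f (j {k} - j ∅) + f (j ∅ - j ↑B)
            = (∑ i ∈ A, w i - w k) + w k + ∑ i ∈ B, w i := by
          rw [← map_add, ← map_add]
          have : (j ↑A - j {k}) + (j {k} - j ∅) + (j ∅ - j ↑B) = j ↑A - j ↑B := by abel
          rw [this, hfnorm]; ring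
        obtain ⟨-, h2, -⟩ := split3 (hfle _ _ |>.trans_eq e1) (hfle _ _ |>.trans_eq e2)
          (hfle _ _ |>.trans_eq hdB0) hsplit
        rw [hj0, sub_zero] at h2
        exact h2
      -- f (j {k}) = -w k for k ∈ B
      have hfB : ∀ k ∈ B, f (j {k}) = -w k := by
        intro k hk
        have e2 : dist (j ∅) (j {k}) = w k := by
          rw [dist_comm, dist_eq_norm, hj0, sub_zero, hnormy]
        have e3 : dist (j {k}) (j ↑B) = ∑ i ∈ B, w i - w k := by
          rw [hj, hsingle, dSet_coe, Finset.sdiff_singleton_eq_erase]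
          have : ({k} : Finset ℕ) \ B = ∅ := by
            rw [Finset.sdiff_eq_empty_iff_subset, Finset.singleton_subset_iff]; exact hk
          rw [this]
          simp [hw, Finset.sum_erase_eq_sub hk]
        have hsplit : f (j ↑A - j ∅) + f (j ∅ - j {k}) + f (j {k} - j ↑B)
            = (∑ i ∈ A, w i) + w k + (∑ i ∈ B, w i - w k) := by
          rw [← map_add, ← map_add]
          have : (j ↑A - j ∅) + (j ∅ - j {k}) + (j {k} - j ↑B) = j ↑A - j ↑B := by abel
          rw [this, hfnorm]; ring
        obtain ⟨-, h2, -⟩ := split3 (hfle _ _ |>.trans_eq hdA0) (hfle _ _ |>.trans_eq e2)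
          (hfle _ _ |>.trans_eq e3) hsplit
        rw [hj0, zero_sub, map_neg] at h2
        linarith
      have hfS : f (∑ k ∈ F, α k • ((2 : ℝ) ^ (k + 1) • j {k})) = ∑ k ∈ F, |α k| := by
        rw [map_sum]
        apply Finset.sum_congr rfl
        intro k hk
        rw [map_smul, map_smul, smul_eq_mul, smul_eq_mul]
        rcases lt_trichotomy (α k) 0 with h | h | h
        · have : k ∈ B := Finset.mem_filter.2 ⟨hk, h⟩
          rw [hfB k this, abs_of_neg h]
          have := hpow k
          nlinarith [hpow k]
        · rw [h]; simp
        · have : k ∈ A := Finset.mem_filter.2 ⟨hk, h⟩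
          rw [hfA k this, abs_of_pos h]
          nlinarith [hpow k]
      calc ∑ k ∈ F, |α k| = f _ := hfS.symm
        _ ≤ ‖f _‖ := le_abs_self _
        _ ≤ ‖f‖ * ‖∑ k ∈ F, α k • ((2 : ℝ) ^ (k + 1) • j {k})‖ := f.le_opNorm _
        _ = _ := by rw [hf1, one_mul]

end main

/-- Let `Y` be a real Banach space and `j` a distance-preserving map from
`(𝒫(ℕ), d)` into `Y` with `j ∅ = 0`. With `y_n = 2ⁿ • j {n}`, the map
`T : ℓ₁ → Y`, `T α = Σ_k α_k y_k`, is a linear isometric embedding of `ℓ₁` into `Y`. -/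
theorem stmt12 (Y : Type*) [NormedAddCommGroup Y] [NormedSpace ℝ Y] [CompleteSpace Y]
    (j : Set ℕ → Y) (hj : ∀ A B : Set ℕ, dist (j A) (j B) = dSet A B)
    (hj0 : j ∅ = 0) :
    ∃ T : lp (fun _ : ℕ => ℝ) 1 →ₗᵢ[ℝ] Y,
      ∀ α : lp (fun _ : ℕ => ℝ) 1,
        T α = ∑' k : ℕ, (α : ∀ _ : ℕ, ℝ) k • ((2 : ℝ) ^ (k + 1) • j {k}) := by
  set y : ℕ → Y := fun k => (2 : ℝ) ^ (k + 1) • j {k} with hy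
  have hnormy : ∀ k : ℕ, ‖y k‖ = 1 := by
    intro k
    have := key_norm j hj hj0 {k} (fun _ => 1)
    simpa [hy] using this
  have hsummable : ∀ α : lp (fun _ : ℕ => ℝ) 1,
      Summable (fun k : ℕ => (α : ∀ _ : ℕ, ℝ) k • y k) := by
    intro α
    apply Summable.of_norm
    have h := (lp.memℓp α).summable (by norm_num : 0 < (1 : ENNReal).toReal)
    simp only [ENNReal.toReal_one, Real.rpow_one] at h
    convert h using 2 with k
    rw [norm_smul, hnormy, mul_one]
  have hS : ∀ α : lp (fun _ : ℕ => ℝ) 1,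
      HasSum (fun k : ℕ => (α : ∀ _ : ℕ, ℝ) k • y k)
        (∑' k : ℕ, (α : ∀ _ : ℕ, ℝ) k • y k) := fun α => (hsummable α).hasSum
  have hnormT : ∀ α : lp (fun _ : ℕ => ℝ) 1,
      ‖∑' k : ℕ, (α : ∀ _ : ℕ, ℝ) k • y k‖ = ‖α‖ := by
    intro α
    have h1 : Filter.Tendsto (fun F : Finset ℕ => ‖∑ k ∈ F, (α : ∀ _ : ℕ, ℝ) k • y k‖)
        Filter.atTop (nhds ‖∑' k : ℕ, (α : ∀ _ : ℕ, ℝ) k • y k‖) :=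
      (continuous_norm.tendsto _).comp (hS α)
    have habs : Summable (fun k : ℕ => |(α : ∀ _ : ℕ, ℝ) k|) := by
      have h := (lp.memℓp α).summable (by norm_num : 0 < (1 : ENNReal).toReal)
      simpa [Real.norm_eq_abs] using h
    have h2 : Filter.Tendsto (fun F : Finset ℕ => ∑ k ∈ F, |(α : ∀ _ : ℕ, ℝ) k|)
        Filter.atTop (nhds (∑' k : ℕ, |(α : ∀ _ : ℕ, ℝ) k|)) := habs.hasSum
    have heq : (fun F : Finset ℕ => ‖∑ k ∈ F, (α : ∀ _ : ℕ, ℝ) k • y k‖)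
        = fun F : Finset ℕ => ∑ k ∈ F, |(α : ∀ _ : ℕ, ℝ) k| := by
      funext F
      exact key_norm j hj hj0 F _
    rw [heq] at h1
    have := tendsto_nhds_unique h1 h2
    rw [this]
    rw [lp.norm_eq_tsum_rpow (by norm_num) α]
    simp [Real.norm_eq_abs]
  refine ⟨⟨⟨⟨fun α => ∑' k : ℕ, (α : ∀ _ : ℕ, ℝ) k • y k, ?_⟩, ?_⟩, ?_⟩, fun α => rfl⟩
  · intro α β
    have h1 := hS α
    have h2 := hS β
    have := (h1.add h2).tsum_eq
    rw [← this]
    apply tsum_congr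
    intro k
    rw [lp.coeFn_add]
    simp [add_smul]
  · intro c α
    have h1 := (hS α).const_smul c
    simp only [RingHom.id_apply]
    show (∑' k : ℕ, ((c • α : lp (fun _ : ℕ => ℝ) 1) : ∀ _ : ℕ, ℝ) k • y k)
      = c • ∑' k : ℕ, (α : ∀ _ : ℕ, ℝ) k • y k
    rw [← h1.tsum_eq]
    apply tsum_congr
    intro k
    rw [lp.coeFn_smul]
    simp [smul_smul]
  · intro α
    exact hnormT α
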